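/- arXiv:2306.04232 — 3 statements merged into one kernel-verified Lean document; each statement's English description precedes it below -/
import Mathlib

section
/- Let p ≥ 2, a > 0, b ≥ 0, q = (p-1)/2, and let g : [0,a] → ℝ be bounded and measurable with lim_{w→a⁻} g(w)/(a-w)^b = 1. Define H(y) = y^(-(b+q)) · ∫_0^y g(v + a - y) f_{p-1}(v) dv for y ∈ (0,a], where f_{p-1} is the chi-squared density with p-1 degrees of freedom. Then lim_{y→0⁺} H(y) = Γ(b+1) / (Γ(b + (p+1)/2) · 2^((p-1)/2)). -/
open MeasureTheory Real Filter

/-- Density of the chi-squared distribution with `k` degrees of freedom (for `v > 0`). -/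
noncomputable def chiSqPDF (k : ℝ) (v : ℝ) : ℝ :=
  v ^ (k / 2 - 1) * Real.exp (-v / 2) / (Real.Gamma (k / 2) * 2 ^ (k / 2))

/-- `H(y) = y^{-(b+q)} ∫_0^y g(v + a - y) f_{p-1}(v) dv`, with `q = (p-1)/2`. -/
noncomputable def Hfun (p : ℕ) (a b : ℝ) (g : ℝ → ℝ) (y : ℝ) : ℝ :=
  y ^ (-(b + ((p : ℝ) - 1) / 2)) *
    ∫ v in Set.Ioo (0 : ℝ) y, g (v + a - y) * chiSqPDF ((p : ℝ) - 1) v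

lemma real_beta {u v : ℝ} (hu : 0 < u) (hv : 0 < v) :
    ∫ x in (0:ℝ)..1, x ^ (u - 1) * (1 - x) ^ (v - 1) =
      Real.Gamma u * Real.Gamma v / Real.Gamma (u + v) := by
  have key := Complex.Gamma_mul_Gamma_eq_betaIntegral (s := u) (t := v)
    (by simpa using hu) (by simpa using hv)
  have hB : Complex.betaIntegral u v =
      ((∫ x in (0:ℝ)..1, x ^ (u - 1) * (1 - x) ^ (v - 1) : ℝ) : ℂ) := by
    rw [Complex.betaIntegral, ← intervalIntegral.integral_ofReal]
    rw [intervalIntegral.integral_of_le zero_le_one,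
      intervalIntegral.integral_of_le zero_le_one]
    refine setIntegral_congr_fun measurableSet_Ioc fun x hx => ?_
    rw [Complex.ofReal_mul, Complex.ofReal_cpow hx.1.le, Complex.ofReal_cpow (by linarith [hx.2])]
    push_cast
    ring_nf
  rw [hB, ← Complex.ofReal_add, Complex.Gamma_ofReal, Complex.Gamma_ofReal,
    Complex.Gamma_ofReal, ← Complex.ofReal_mul, ← Complex.ofReal_mul] at key
  have := Complex.ofReal_injective key
  have hne : Real.Gamma (u + v) ≠ 0 := Real.Gamma_ne_zero (by intro m; nlinarith [hu, hv])
  rw [this, mul_div_cancel_left₀ _ hne]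

theorem stmt1 (p : ℕ) (hp : 2 ≤ p) (a : ℝ) (ha : 0 < a) (b : ℝ) (hb : 0 ≤ b)
    (g : ℝ → ℝ) (hmeas : Measurable g)
    (hbound : ∃ M, ∀ w ∈ Set.Icc (0 : ℝ) a, |g w| ≤ M)
    (hlim : Tendsto (fun w => g w / (a - w) ^ b) (nhdsWithin a (Set.Iio a)) (nhds 1)) :
    Tendsto (Hfun p a b g) (nhdsWithin 0 (Set.Ioi 0))
      (nhds (Real.Gamma (b + 1) /
        (Real.Gamma (b + ((p : ℝ) + 1) / 2) * 2 ^ (((p : ℝ) - 1) / 2)))) := by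
  have hp1 : (1:ℝ) ≤ (p:ℝ) - 1 := by
    have : (2:ℝ) ≤ (p:ℝ) := by exact_mod_cast hp
    linarith
  set q : ℝ := ((p:ℝ) - 1) / 2 with hq_def
  have hq : 0 < q := by rw [hq_def]; linarith
  set c : ℝ := Real.Gamma q * 2 ^ q with hc_def
  have hc : 0 < c := mul_pos (Real.Gamma_pos_of_pos hq) (rpow_pos_of_pos two_pos q)
  set F : ℝ → ℝ → ℝ := fun y t =>
    (y ^ (-b) * g (a - y * (1 - t))) * (t ^ (q - 1) * Real.exp (-(y * t) / 2)) with hF_def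
  -- Step 1: change of variables
  have step1 : ∀ y ∈ Set.Ioi (0:ℝ), Hfun p a b g y = c⁻¹ * ∫ t in Set.Ioo (0:ℝ) 1, F y t := by
    intro y hy
    have hy0 : (0:ℝ) < y := hy
    have hICV : ∫ v in Set.Ioo (0:ℝ) y, g (v + a - y) * chiSqPDF ((p:ℝ)-1) v
        = y * ∫ t in Set.Ioo (0:ℝ) 1, g (y*t + a - y) * chiSqPDF ((p:ℝ)-1) (y*t) := by
      rw [← integral_Ioc_eq_integral_Ioo, ← intervalIntegral.integral_of_le hy0.le]
      have hcv := intervalIntegral.smul_integral_comp_mul_left (a := 0) (b := 1)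
        (fun v => g (v + a - y) * chiSqPDF ((p:ℝ)-1) v) y
      rw [mul_zero, mul_one] at hcv
      rw [← hcv, intervalIntegral.integral_of_le zero_le_one, integral_Ioc_eq_integral_Ioo,
        smul_eq_mul]
    have hIcongr : ∫ t in Set.Ioo (0:ℝ) 1, g (y*t + a - y) * chiSqPDF ((p:ℝ)-1) (y*t)
        = (y^(q-1) * c⁻¹) *
          ∫ t in Set.Ioo (0:ℝ) 1, g (a - y*(1-t)) * (t^(q-1) * Real.exp (-(y*t)/2)) := by
      rw [← integral_const_mul]
      refine setIntegral_congr_fun measurableSet_Ioo fun t ht => ?_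
      obtain ⟨ht0, ht1⟩ := ht
      rw [chiSqPDF, ← hq_def, mul_rpow hy0.le ht0.le,
        show y*t + a - y = a - y*(1-t) by ring, hc_def]
      ring
    have hFI : ∫ t in Set.Ioo (0:ℝ) 1, F y t
        = y^(-b) * ∫ t in Set.Ioo (0:ℝ) 1, g (a - y*(1-t)) * (t^(q-1)*Real.exp (-(y*t)/2)) := by
      rw [← integral_const_mul]
      refine setIntegral_congr_fun measurableSet_Ioo fun t ht => ?_
      rw [hF_def]; ring
    have hpow : y ^ (-(b+q)) * y * y^(q-1) = y^(-b) := by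
      have h1 : y ^ (-(b+q)) * y ^ (1:ℝ) * y ^ (q-1) = y ^ (-(b+q)+1+(q-1)) := by
        rw [← Real.rpow_add hy0, ← Real.rpow_add hy0]
      rw [Real.rpow_one] at h1
      rw [h1]; congr 1; ring
    simp only [Hfun, ← hq_def]
    rw [hICV, hIcongr, hFI, ← hpow]
    ring
  -- Step 2: dominated convergence
  have step2 : Tendsto (fun y => ∫ t in Set.Ioo (0:ℝ) 1, F y t) (nhdsWithin 0 (Set.Ioi 0))
      (nhds (∫ t in Set.Ioo (0:ℝ) 1, (1 - t) ^ b * t ^ (q - 1))) := by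
    have h2 : ∀ᶠ w in nhdsWithin a (Set.Iio a), |g w| ≤ 2 * (a - w) ^ b := by
      have h3 := Metric.tendsto_nhds.mp hlim 1 one_pos
      filter_upwards [h3, self_mem_nhdsWithin] with w hw hw'
      rw [Real.dist_eq] at hw
      have hwa : w < a := hw'
      have hpos : (0:ℝ) < (a - w) ^ b := rpow_pos_of_pos (by linarith) b
      have habs : |g w / (a - w) ^ b| ≤ 2 := by
        have := abs_sub_abs_le_abs_sub (g w / (a - w) ^ b) 1
        rw [abs_one] at this
        linarith
      rw [abs_div, abs_of_pos hpos, div_le_iff₀ hpos] at habs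
      linarith
    obtain ⟨l0, hl0, hsub⟩ := mem_nhdsLT_iff_exists_Ioo_subset.mp h2
    have hl0a : l0 < a := hl0
    have hδpos : (0:ℝ) < a - l0 := by linarith
    refine tendsto_integral_filter_of_dominated_convergence (fun t => 2 * t ^ (q-1)) ?_ ?_ ?_ ?_
    · filter_upwards [self_mem_nhdsWithin] with y hy
      apply Measurable.aestronglyMeasurable
      fun_prop
    · filter_upwards [Ioo_mem_nhdsGT_of_mem (Set.left_mem_Ico.mpr hδpos)] with y hy
      filter_upwards [ae_restrict_mem measurableSet_Ioo] with t ht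
      obtain ⟨hy0, hyδ⟩ := hy
      obtain ⟨ht0, ht1⟩ := ht
      have h1t : (0:ℝ) < 1 - t := by linarith
      have hw : a - y*(1-t) ∈ Set.Ioo l0 a := by
        constructor <;> nlinarith
      have hgw : |g (a - y*(1-t))| ≤ 2 * (a - (a - y*(1-t))) ^ b := hsub hw
      rw [show a - (a - y*(1-t)) = y*(1-t) by ring] at hgw
      have hyb : (0:ℝ) < y ^ b := rpow_pos_of_pos hy0 b
      have key : y ^ (-b) * |g (a - y*(1-t))| ≤ 2 * (1-t)^b := by
        rw [rpow_neg hy0.le]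
        rw [mul_rpow hy0.le h1t.le] at hgw
        have step := mul_le_mul_of_nonneg_left hgw (inv_nonneg.mpr hyb.le)
        calc (y^b)⁻¹ * |g (a - y*(1-t))| ≤ (y^b)⁻¹ * (2*(y^b*(1-t)^b)) := step
        _ = 2*(1-t)^b := by field_simp
      have hE : Real.exp (-(y*t)/2) ≤ 1 := Real.exp_le_one_iff.mpr (by nlinarith)
      have hEpos := Real.exp_pos (-(y*t)/2)
      have hB : (0:ℝ) < t ^ (q-1) := rpow_pos_of_pos ht0 _
      have hone : (1-t)^b ≤ 1 := Real.rpow_le_one h1t.le (by linarith) hb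
      have hnorm : ‖F y t‖ = (y^(-b) * |g (a - y*(1-t))|) * (t^(q-1) * Real.exp (-(y*t)/2)) := by
        rw [hF_def, Real.norm_eq_abs, abs_mul, abs_mul, abs_mul,
          abs_of_pos (rpow_pos_of_pos hy0 _), abs_of_pos hB, abs_of_pos hEpos]
      rw [hnorm]
      have h2tb : (0:ℝ) ≤ (1-t)^b := (rpow_pos_of_pos h1t b).le
      have hgnn : (0:ℝ) ≤ y ^ (-b) * |g (a - y*(1-t))| :=
        mul_nonneg (rpow_pos_of_pos hy0 _).le (abs_nonneg _)
      calc (y^(-b) * |g (a - y*(1-t))|) * (t^(q-1) * Real.exp (-(y*t)/2))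
          ≤ (2*(1-t)^b) * (t^(q-1) * Real.exp (-(y*t)/2)) :=
            mul_le_mul_of_nonneg_right key (mul_pos hB hEpos).le
        _ ≤ (2*1) * (t^(q-1) * 1) := by
            apply mul_le_mul (by linarith) (by nlinarith) (mul_pos hB hEpos).le (by norm_num)
        _ = 2 * t^(q-1) := by ring
    · have hii : IntervalIntegrable (fun t : ℝ => t ^ (q-1)) volume 0 1 :=
        intervalIntegral.intervalIntegrable_rpow' (by linarith)
      have hio := (intervalIntegrable_iff_integrableOn_Ioc_of_le zero_le_one).mp hii
      exact (hio.mono_set Set.Ioo_subset_Ioc_self).const_mul 2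
    · filter_upwards [ae_restrict_mem measurableSet_Ioo] with t ht
      obtain ⟨ht0, ht1⟩ := ht
      have h1t : (0:ℝ) < 1 - t := by linarith
      have hwt : Tendsto (fun y => a - y*(1-t)) (nhdsWithin 0 (Set.Ioi 0))
          (nhdsWithin a (Set.Iio a)) := by
        apply tendsto_nhdsWithin_of_tendsto_nhds_of_eventually_within
        · have hcont : Tendsto (fun y : ℝ => a - y*(1-t)) (nhds 0) (nhds (a - 0*(1-t))) :=
            tendsto_const_nhds.sub (tendsto_id.mul_const _)
          simpa using hcont.mono_left nhdsWithin_le_nhds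
        · filter_upwards [self_mem_nhdsWithin] with y hy
          have hy0 : (0:ℝ) < y := hy
          have : (0:ℝ) < y * (1-t) := mul_pos hy0 h1t
          simp only [Set.mem_Iio]; linarith
      have hg := hlim.comp hwt
      have hexp : Tendsto (fun y => Real.exp (-(y*t)/2)) (nhdsWithin 0 (Set.Ioi 0)) (nhds 1) := by
        have h0 : Tendsto (fun y : ℝ => -(y*t)/2) (nhds 0) (nhds (-(0*t)/2)) :=
          ((tendsto_id.mul_const t).neg).div_const 2
        have h1 : Tendsto (fun y : ℝ => Real.exp (-(y*t)/2)) (nhds 0) (nhds (Real.exp (-(0*t)/2))) :=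
          (Real.continuous_exp.tendsto _).comp h0
        have h1' := h1.mono_left (nhdsWithin_le_nhds (s := Set.Ioi 0))
        simpa using h1'
      have hmain := (hg.mul_const ((1-t)^b)).mul ((tendsto_const_nhds (x := t^(q-1))).mul hexp)
      rw [show (1 : ℝ) * (1-t)^b * (t^(q-1) * 1) = (1-t)^b * t^(q-1) by ring] at hmain
      refine Tendsto.congr' ?_ hmain
      filter_upwards [self_mem_nhdsWithin] with y hy
      have hy0 : (0:ℝ) < y := hy
      have hyb : (0:ℝ) < y ^ b := rpow_pos_of_pos hy0 b
      have htb : (0:ℝ) < (1-t) ^ b := rpow_pos_of_pos h1t b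
      simp only [Function.comp, hF_def]
      rw [show a - (a - y*(1-t)) = y*(1-t) by ring, mul_rpow hy0.le h1t.le, rpow_neg hy0.le]
      field_simp
  -- Step 3: beta value
  have step3 : ∫ t in Set.Ioo (0:ℝ) 1, (1 - t) ^ b * t ^ (q - 1)
      = Real.Gamma q * Real.Gamma (b + 1) / Real.Gamma (q + (b + 1)) := by
    rw [← real_beta hq (by linarith : (0:ℝ) < b + 1),
      intervalIntegral.integral_of_le zero_le_one, integral_Ioc_eq_integral_Ioo]
    refine setIntegral_congr_fun measurableSet_Ioo fun t ht => ?_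
    rw [show b + 1 - 1 = b by ring, mul_comm]
  have hfinal : c⁻¹ * (Real.Gamma q * Real.Gamma (b + 1) / Real.Gamma (q + (b + 1)))
      = Real.Gamma (b + 1) / (Real.Gamma (b + ((p : ℝ) + 1) / 2) * 2 ^ q) := by
    have h1 : Real.Gamma (b + ((p : ℝ) + 1) / 2) = Real.Gamma (q + (b + 1)) := by
      congr 1; rw [hq_def]; ring
    have hΓq : Real.Gamma q ≠ 0 := (Real.Gamma_pos_of_pos hq).ne'
    have hΓ2 : Real.Gamma (q + (b + 1)) ≠ 0 := (Real.Gamma_pos_of_pos (by linarith)).ne'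
    have h2 : (2:ℝ) ^ q ≠ 0 := (rpow_pos_of_pos two_pos q).ne'
    rw [h1, hc_def]
    field_simp
  rw [← hfinal, ← step3]
  exact Tendsto.congr'
    (by filter_upwards [self_mem_nhdsWithin] with y hy; exact (step1 y hy).symm)
    (step2.const_mul c⁻¹)
end

section
/- Let p ≥ 2, a > 0, b ≥ 0, q = (p-1)/2, and let g : [0,a] → ℝ be bounded and measurable with lim_{w→a⁻} g(w)/(a-w)^b = 1. Define H(y) = y^(-(b+q)) · ∫_0^y g(v + a - y) f_{p-1}(v) dv for y ∈ (0,a]. Then H is bounded on (0,a]. -/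
open MeasureTheory Real Filter

/-- Pointwise bound for the chi-squared density. -/
lemma chiSqPDF_abs_le (k v : ℝ) (hk : 0 < k) (hv : 0 ≤ v) :
    |chiSqPDF k v| ≤ v ^ (k / 2 - 1) / (Real.Gamma (k / 2) * 2 ^ (k / 2)) := by
  have h1 : 0 < Real.Gamma (k / 2) := Real.Gamma_pos_of_pos (by positivity)
  have h2 : (0 : ℝ) < (2 : ℝ) ^ (k / 2) := Real.rpow_pos_of_pos two_pos _
  have h3 : 0 ≤ v ^ (k / 2 - 1) := Real.rpow_nonneg hv _
  have h4 : Real.exp (-v / 2) ≤ 1 := Real.exp_le_one_iff.mpr (by linarith)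
  have h5 : 0 ≤ Real.exp (-v / 2) := (Real.exp_pos _).le
  unfold chiSqPDF
  rw [abs_of_nonneg (by positivity)]
  apply div_le_div_of_nonneg_right ?_ (by positivity) |>.trans_eq rfl
  · nlinarith

lemma integral_rpow_Ioo (q y : ℝ) (hq : 0 < q) (hy : 0 < y) :
    ∫ v in Set.Ioo (0 : ℝ) y, v ^ (q - 1) = y ^ q / q := by
  rw [← MeasureTheory.integral_Ioc_eq_integral_Ioo, ← intervalIntegral.integral_of_le hy.le,
    integral_rpow (Or.inl (by linarith))]
  rw [show q - 1 + 1 = q by ring, Real.zero_rpow hq.ne', sub_zero]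

lemma integrableOn_rpow_Ioo (q y : ℝ) (hq : 0 < q) (hy : 0 < y) :
    IntegrableOn (fun v : ℝ => v ^ (q - 1)) (Set.Ioo 0 y) :=
  ((intervalIntegral.intervalIntegrable_rpow' (by linarith : (-1 : ℝ) < q - 1)
    (a := 0) (b := y)).1).mono_set Set.Ioo_subset_Ioc_self

/-- Main integral bound. -/
lemma integral_abs_le (q C0 K y : ℝ) (hq : 0 < q) (hC0 : 0 < C0) (hy : 0 < y) (hK : 0 ≤ K)
    (F : ℝ → ℝ) (hFmeas : Measurable F)
    (hFb : ∀ v ∈ Set.Ioo (0 : ℝ) y, |F v| ≤ K / C0 * v ^ (q - 1)) :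
    |∫ v in Set.Ioo (0 : ℝ) y, F v| ≤ K * y ^ q / (q * C0) := by
  have hint := integrableOn_rpow_Ioo q y hq hy
  have hdomint : IntegrableOn (fun v : ℝ => K / C0 * v ^ (q - 1)) (Set.Ioo 0 y) :=
    hint.const_mul _
  have hFint : IntegrableOn F (Set.Ioo 0 y) := by
    refine hdomint.mono' hFmeas.aestronglyMeasurable ?_
    rw [ae_restrict_iff' measurableSet_Ioo]
    filter_upwards with v hv
    rw [Real.norm_eq_abs]
    exact hFb v hv
  have h1 : |∫ v in Set.Ioo (0 : ℝ) y, F v| ≤ ∫ v in Set.Ioo (0 : ℝ) y, |F v| := by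
    simpa [Real.norm_eq_abs] using
      norm_integral_le_integral_norm (μ := volume.restrict (Set.Ioo 0 y)) F
  have h2 : ∫ v in Set.Ioo (0 : ℝ) y, |F v|
      ≤ ∫ v in Set.Ioo (0 : ℝ) y, K / C0 * v ^ (q - 1) :=
    setIntegral_mono_on hFint.abs hdomint measurableSet_Ioo (fun v hv => hFb v hv)
  have h3 : ∫ v in Set.Ioo (0 : ℝ) y, K / C0 * v ^ (q - 1) = K * y ^ q / (q * C0) := by
    rw [MeasureTheory.integral_const_mul, integral_rpow_Ioo q y hq hy,
      div_mul_div_comm, mul_comm C0 q]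
  linarith

theorem stmt2 (p : ℕ) (hp : 2 ≤ p) (a : ℝ) (ha : 0 < a) (b : ℝ) (hb : 0 ≤ b)
    (g : ℝ → ℝ) (hmeas : Measurable g)
    (hbound : ∃ M, ∀ w ∈ Set.Icc (0 : ℝ) a, |g w| ≤ M)
    (hlim : Tendsto (fun w => g w / (a - w) ^ b) (nhdsWithin a (Set.Iio a)) (nhds 1)) :
    ∃ M : ℝ, ∀ y ∈ Set.Ioc (0 : ℝ) a, |Hfun p a b g y| ≤ M := by
  obtain ⟨M, hM⟩ := hbound
  set q : ℝ := ((p : ℝ) - 1) / 2 with hqdef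
  have hp1 : (2 : ℝ) ≤ (p : ℝ) := by exact_mod_cast hp
  have hq : 0 < q := by rw [hqdef]; linarith
  set C0 : ℝ := Real.Gamma q * 2 ^ q with hC0def
  have hGamma : 0 < Real.Gamma q := Real.Gamma_pos_of_pos hq
  have h2q : (0 : ℝ) < (2 : ℝ) ^ q := Real.rpow_pos_of_pos two_pos _
  have hC0 : 0 < C0 := mul_pos hGamma h2q
  have hk2 : ((p : ℝ) - 1) / 2 = q := rfl
  have hM0 : 0 ≤ M := (abs_nonneg _).trans (hM 0 ⟨le_refl _, ha.le⟩)
  -- get δ from the limit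
  rw [Metric.tendsto_nhdsWithin_nhds] at hlim
  obtain ⟨δ, hδpos, hδ⟩ := hlim 1 one_pos
  -- bound near a
  have gbound1 : ∀ w, a - δ < w → w < a → |g w| ≤ 2 * (a - w) ^ b := by
    intro w h1 h2
    have hpos : 0 < (a - w) ^ b := Real.rpow_pos_of_pos (by linarith) b
    have hd := hδ (Set.mem_Iio.mpr h2)
      (by rw [Real.dist_eq, abs_of_nonpos (by linarith)]; linarith)
    rw [Real.dist_eq] at hd
    have habs : |g w / (a - w) ^ b| ≤ 2 := by
      have := abs_add_le (g w / (a - w) ^ b - 1) 1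
      simp only [sub_add_cancel] at this
      simp only [abs_one] at this
      linarith
    rw [abs_div, abs_of_pos hpos, div_le_iff₀ hpos] at habs
    linarith
    -- done
  set δ' : ℝ := min δ a with hδ'def
  have hδ'pos : 0 < δ' := lt_min hδpos ha
  have hδ'a : δ' ≤ a := min_le_right _ _
  have hδ'δ : δ' ≤ δ := min_le_left _ _
  -- constants
  set B1 : ℝ := 2 / (q * C0) with hB1def
  set B2 : ℝ := δ' ^ (-(b + q)) * (M * a ^ q / (q * C0)) with hB2def
  refine ⟨max B1 B2, ?_⟩
  rintro y ⟨hy0, hya⟩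
  set F : ℝ → ℝ := fun v => g (v + a - y) * chiSqPDF ((p : ℝ) - 1) v with hFdef
  have hFmeas : Measurable F := by
    apply Measurable.mul
    · exact hmeas.comp (by fun_prop)
    · unfold chiSqPDF; fun_prop
  have hchib : ∀ v ∈ Set.Ioo (0 : ℝ) y, |chiSqPDF ((p : ℝ) - 1) v| ≤ v ^ (q - 1) / C0 := by
    intro v hv
    have := chiSqPDF_abs_le ((p : ℝ) - 1) v (by linarith) hv.1.le
    rwa [hk2] at this
  have hHy : |Hfun p a b g y| = y ^ (-(b + q)) * |∫ v in Set.Ioo (0 : ℝ) y, F v| := by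
    rw [Hfun, abs_mul, abs_of_nonneg (Real.rpow_nonneg hy0.le _)]
  have key : ∀ K : ℝ, 0 ≤ K → (∀ v ∈ Set.Ioo (0 : ℝ) y, |g (v + a - y)| ≤ K) →
      |∫ v in Set.Ioo (0 : ℝ) y, F v| ≤ K * y ^ q / (q * C0) := by
    intro K hK hgK
    refine integral_abs_le q C0 K y hq hC0 hy0 hK F hFmeas ?_
    intro v hv
    rw [hFdef]
    simp only
    rw [abs_mul]
    calc |g (v + a - y)| * |chiSqPDF ((p : ℝ) - 1) v|
        ≤ K * (v ^ (q - 1) / C0) :=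
          mul_le_mul (hgK v hv) (hchib v hv) (abs_nonneg _)
            hK
      _ = K / C0 * v ^ (q - 1) := by ring
  by_cases hcase : y ≤ δ'
  · -- small y case
    have hgK : ∀ v ∈ Set.Ioo (0 : ℝ) y, |g (v + a - y)| ≤ 2 * y ^ b := by
      intro v hv
      have hw1 : a - δ < v + a - y := by
        have : y ≤ δ := hcase.trans hδ'δ
        linarith [hv.1]
      have hw2 : v + a - y < a := by linarith [hv.2]
      have := gbound1 (v + a - y) hw1 hw2
      have heq : a - (v + a - y) = y - v := by ring
      rw [heq] at this
      refine this.trans ?_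
      have : (y - v) ^ b ≤ y ^ b :=
        Real.rpow_le_rpow (by linarith [hv.1]) (by linarith [hv.1]) hb
      linarith
    have hK : (0 : ℝ) ≤ 2 * y ^ b := by positivity
    have h1 := key (2 * y ^ b) hK hgK
    have h2 : |Hfun p a b g y| ≤ y ^ (-(b + q)) * (2 * y ^ b * y ^ q / (q * C0)) := by
      rw [hHy]
      exact mul_le_mul_of_nonneg_left h1 (Real.rpow_nonneg hy0.le _)
    have hpow : y ^ (-(b + q)) * (y ^ b * y ^ q) = 1 := by
      rw [← Real.rpow_add hy0 b q, ← Real.rpow_add hy0]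
      rw [show -(b + q) + (b + q) = 0 by ring, Real.rpow_zero]
    have h3 : y ^ (-(b + q)) * (2 * y ^ b * y ^ q / (q * C0)) = B1 := by
      rw [hB1def]
      calc y ^ (-(b + q)) * (2 * y ^ b * y ^ q / (q * C0))
          = y ^ (-(b + q)) * (y ^ b * y ^ q) * (2 / (q * C0)) := by ring
        _ = 2 / (q * C0) := by rw [hpow, one_mul]
    exact le_max_iff.mpr (Or.inl (h3 ▸ h2))
  · -- y ≥ δ'
    push_neg at hcase
    have hgK : ∀ v ∈ Set.Ioo (0 : ℝ) y, |g (v + a - y)| ≤ M := by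
      intro v hv
      exact hM (v + a - y) ⟨by linarith [hv.1], by linarith [hv.2]⟩
    have h1 := key M hM0 hgK
    have hyq : y ^ q ≤ a ^ q := Real.rpow_le_rpow hy0.le hya hq.le
    have h1' : |∫ v in Set.Ioo (0 : ℝ) y, F v| ≤ M * a ^ q / (q * C0) := by
      refine h1.trans ?_
      apply div_le_div_of_nonneg_right ?_ (by positivity) |>.trans_eq rfl
      nlinarith
    have hrp : y ^ (-(b + q)) ≤ δ' ^ (-(b + q)) :=
      Real.rpow_le_rpow_of_nonpos hδ'pos hcase.le (by linarith)
    have h2 : |Hfun p a b g y| ≤ B2 := by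
      rw [hHy, hB2def]
      exact mul_le_mul hrp h1' (abs_nonneg _) (Real.rpow_nonneg hδ'pos.le _)
    exact le_max_iff.mpr (Or.inr h2)
end

section
/- Let p ≥ 3, a > 0, and let φ : [0,∞) → ℝ be weakly differentiable with bounded derivative, satisfying 0 < φ(w) ≤ w on (0,a) and φ(w) = 0 on [a,∞). Suppose lim_{w→a⁻} φ'(w) = 0 and there exist ε ∈ (0,1) and γ > 1 such that -γ < (a-w)·φ'(w)/φ(w) < -1/γ for all w ∈ (εa, a). Then there exists a constant c > 0 and ε'' ∈ (0,1) such that r_φ(w) ≥ c·(a-w)^(γ-1) for all w ∈ (ε''a, a), where r_φ(w) = (φ(w)/w)·(φ(w) - 2(p-2)) - 4φ'(w). -/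
open Filter

theorem stmt9 (p : ℕ) (hp : 3 ≤ p) (a : ℝ) (ha : 0 < a)
    (φ φ' : ℝ → ℝ) (hderiv : ∀ w : ℝ, HasDerivAt φ (φ' w) w)
    (hbdd : ∃ C, ∀ w : ℝ, |φ' w| ≤ C)
    (hpos : ∀ w ∈ Set.Ioo (0 : ℝ) a, 0 < φ w ∧ φ w ≤ w)
    (hzero : ∀ w : ℝ, a ≤ w → φ w = 0)
    (hlim : Tendsto φ' (nhdsWithin a (Set.Iio a)) (nhds 0))
    (ε γ : ℝ) (hε : ε ∈ Set.Ioo (0 : ℝ) 1) (hγ : 1 < γ)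
    (hratio : ∀ w ∈ Set.Ioo (ε * a) a,
      -γ < (a - w) * φ' w / φ w ∧ (a - w) * φ' w / φ w < -(1 / γ)) :
    ∃ c > (0 : ℝ), ∃ ε'' ∈ Set.Ioo (0 : ℝ) 1, ∀ w ∈ Set.Ioo (ε'' * a) a,
      c * (a - w) ^ (γ - 1) ≤ φ w / w * (φ w - 2 * ((p : ℝ) - 2)) - 4 * φ' w := by
  obtain ⟨hε0, hε1⟩ := hε
  have hγ0 : (0:ℝ) < γ := lt_trans one_pos hγ
  have hp2 : (1:ℝ) ≤ (p:ℝ) - 2 := by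
    have : (3:ℝ) ≤ (p:ℝ) := by exact_mod_cast hp
    linarith
  set w0 : ℝ := ((ε + 1)/2) * a with hw0def
  have hεaw0 : ε * a < w0 := by rw [hw0def]; nlinarith
  have hw0a : w0 < a := by rw [hw0def]; nlinarith
  have hw0pos : 0 < w0 := lt_trans (mul_pos hε0 ha) hεaw0
  have hφw0 : 0 < φ w0 := (hpos w0 ⟨hw0pos, hw0a⟩).1
  set c2 : ℝ := φ w0 * (a - w0) ^ (-γ) with hc2def
  have hc2 : 0 < c2 := mul_pos hφw0 (Real.rpow_pos_of_pos (by linarith) _)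
  -- key lower bound on φ via monotonicity of φ(t) * (a-t)^(-γ)
  have hφlow : ∀ w ∈ Set.Ioo w0 a, c2 * (a - w) ^ γ ≤ φ w := by
    intro w hw
    set h : ℝ → ℝ := fun t => φ t * (a - t) ^ (-γ) with hhdef
    have hderivh : ∀ t ∈ Set.Icc w0 w, HasDerivAt h
        (φ' t * (a - t) ^ (-γ) + φ t * ((-γ) * (a - t) ^ (-γ - 1) * -1)) t := by
      intro t ht
      have hta : 0 < a - t := by
        have h1 := ht.2
        have h2 := hw.2
        linarith
      have hu : HasDerivAt (fun s : ℝ => a - s) (-1) t := by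
        simpa using (hasDerivAt_id t).const_sub a
      have h1 : HasDerivAt (fun x : ℝ => x ^ (-γ)) ((-γ) * (a - t) ^ (-γ - 1)) (a - t) :=
        Real.hasDerivAt_rpow_const (Or.inl hta.ne')
      have hr : HasDerivAt (fun s : ℝ => (a - s) ^ (-γ)) ((-γ) * (a - t) ^ (-γ - 1) * -1) t := by
        exact h1.comp t hu
      exact (hderiv t).mul hr
    have hmono : StrictMonoOn h (Set.Icc w0 w) := by
      apply strictMonoOn_of_deriv_pos (convex_Icc w0 w)
      · intro t ht
        exact (hderivh t ht).continuousAt.continuousWithinAt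
      · intro t ht
        rw [interior_Icc] at ht
        have ht' : t ∈ Set.Icc w0 w := ⟨ht.1.le, ht.2.le⟩
        rw [(hderivh t ht').deriv]
        have hta : 0 < a - t := by
          have h1 := ht.2
          have h2 := hw.2
          linarith
        have htε : ε * a < t := lt_trans hεaw0 ht.1
        have htpos : 0 < t := lt_trans (mul_pos hε0 ha) htε
        have hφt : 0 < φ t := (hpos t ⟨htpos, by linarith⟩).1
        have hrat := (hratio t ⟨htε, by linarith⟩).1
        have h1 : -γ * φ t < (a - t) * φ' t := by
          rw [lt_div_iff₀ hφt] at hrat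
          linarith
        have hsplit : (a - t) ^ (-γ) = (a - t) ^ (-γ - 1) * (a - t) := by
          have h2 := Real.rpow_add_one hta.ne' (-γ - 1)
          rw [show -γ - 1 + 1 = -γ by ring] at h2
          exact h2
        have hpow : 0 < (a - t) ^ (-γ - 1) := Real.rpow_pos_of_pos hta _
        rw [hsplit]
        have heq : φ' t * ((a - t) ^ (-γ - 1) * (a - t)) + φ t * ((-γ) * (a - t) ^ (-γ - 1) * -1)
            = (a - t) ^ (-γ - 1) * ((a - t) * φ' t + γ * φ t) := by ring
        rw [heq]
        exact mul_pos hpow (by linarith)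
    have hlt : h w0 < h w :=
      hmono (Set.left_mem_Icc.mpr hw.1.le) (Set.right_mem_Icc.mpr hw.1.le) hw.1
    have hwa : 0 < a - w := by linarith [hw.2]
    have hpow : 0 < (a - w) ^ γ := Real.rpow_pos_of_pos hwa _
    have hinv : (a - w) ^ (-γ) * (a - w) ^ γ = 1 := by
      rw [← Real.rpow_add hwa]
      norm_num
    have hh0 : h w0 = c2 := rfl
    have hhw : h w = φ w * (a - w) ^ (-γ) := rfl
    have := mul_lt_mul_of_pos_right hlt hpow
    rw [hh0, hhw] at this
    calc c2 * (a - w) ^ γ ≤ φ w * (a - w) ^ (-γ) * (a - w) ^ γ := this.le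
      _ = φ w * ((a - w) ^ (-γ) * (a - w) ^ γ) := by ring
      _ = φ w := by rw [hinv, mul_one]
  -- choose ε''
  have hK : 0 < γ * ((p:ℝ) - 2) := mul_pos hγ0 (by linarith)
  set ε'' : ℝ := max ((ε + 1)/2) (1 - ε/(γ * ((p:ℝ) - 2))) with hε''def
  refine ⟨2 * c2 / γ, by positivity, ε'', ⟨?_, ?_⟩, ?_⟩
  · exact lt_max_iff.mpr (Or.inl (by linarith))
  · apply max_lt
    · linarith
    · have : 0 < ε/(γ * ((p:ℝ) - 2)) := div_pos hε0 hK
      linarith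
  · intro w hw
    have hw0w : w0 < w := by
      have h1 : ((ε+1)/2) * a ≤ ε'' * a :=
        mul_le_mul_of_nonneg_right (le_max_left _ _) ha.le
      calc w0 = ((ε+1)/2) * a := rfl
        _ ≤ ε'' * a := h1
        _ < w := hw.1
    have hwa : 0 < a - w := by linarith [hw.2]
    have hεw : ε * a < w := lt_trans hεaw0 hw0w
    have hwpos : 0 < w := lt_trans (mul_pos hε0 ha) hεw
    have hφw : 0 < φ w := (hpos w ⟨hwpos, hw.2⟩).1
    have hφub := hφlow w ⟨hw0w, hw.2⟩
    -- H2 : (a - w) * (γ * (p - 2)) < w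
    have hH2 : (a - w) * (γ * ((p:ℝ) - 2)) < w := by
      have h1 : (1 - ε/(γ*((p:ℝ)-2))) * a ≤ ε'' * a :=
        mul_le_mul_of_nonneg_right (le_max_right _ _) ha.le
      have h2 : (1 - ε/(γ*((p:ℝ)-2))) * a < w := lt_of_le_of_lt h1 hw.1
      have heq : (1 - ε/(γ*((p:ℝ)-2))) * a = a - ε*a/(γ*((p:ℝ)-2)) := by ring
      rw [heq] at h2
      have h3 : (a - w) * (γ*((p:ℝ)-2)) < ε * a := (lt_div_iff₀ hK).mp (by linarith)
      linarith
    -- H1 : γ * ((a - w) * φ' w) < -φ w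
    have hrat2 := (hratio w ⟨hεw, hw.2⟩).2
    have hH1 : γ * ((a - w) * φ' w) < -φ w := by
      rw [div_lt_iff₀ hφw] at hrat2
      have h1 := mul_lt_mul_of_pos_left hrat2 hγ0
      have h2 : γ * (-(1/γ) * φ w) = -φ w := by field_simp
      linarith
    -- main inequality
    have keyW : 2 * φ w ≤ (φ w / w * (φ w - 2 * ((p : ℝ) - 2)) - 4 * φ' w) * (γ * (a - w)) := by
      have e : φ w / w * (φ w - 2*((p:ℝ)-2)) - 4 * φ' w
          = (φ w * (φ w - 2*((p:ℝ)-2)) - 4 * φ' w * w) / w := by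
        field_simp
      rw [e, div_mul_eq_mul_div, le_div_iff₀ hwpos]
      have hA := mul_lt_mul_of_pos_right hH1 (show (0:ℝ) < 4 * w by linarith)
      have hB := mul_lt_mul_of_pos_right hH2 hφw
      have hC : 0 ≤ γ * (a - w) * (φ w * φ w) :=
        mul_nonneg (mul_nonneg hγ0.le hwa.le) (mul_nonneg hφw.le hφw.le)
      nlinarith [hA, hB, hC]
    have hsplit : (a - w) ^ (γ - 1) = (a - w) ^ γ / (a - w) := by
      rw [Real.rpow_sub hwa, Real.rpow_one]
    rw [hsplit, div_mul_div_comm, div_le_iff₀ (mul_pos hγ0 hwa)]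
    have hpow : 0 < (a - w) ^ γ := Real.rpow_pos_of_pos hwa _
    linarith [hφub, keyW]
end
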